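/- Let W = ℤ_{≤3} ∪ ⋃_{k≥1} [((k-1)(k+2))/2 + 2^{k+1}, ((k-1)(k+2))/2 + 2^{k+1} + k]. Then for any asymptotic complement C to W in ℤ and any three elements a < b < c of C, the set C \ {b} is also an asymptotic complement to W; moreover W admits no minimal asymptotic complement in ℤ. -/

import Mathlib

open Pointwise

def IsAddAsympCompl (W C : Set ℤ) : Prop :=
  C.Nonempty ∧ ((Set.univ : Set ℤ) \ (W + C)).Finite

def IsAddMinAsympCompl (W C : Set ℤ) : Prop :=
  IsAddAsympCompl W C ∧ ∀ c ∈ C, ¬ IsAddAsympCompl W (C \ {c})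

def blockStart (k : ℕ) : ℤ := ((k : ℤ) - 1) * ((k : ℤ) + 2) / 2 + 2 ^ (k + 1)

lemma aux_dvd (k : ℕ) : (2:ℤ) ∣ ((k : ℤ) - 1) * ((k : ℤ) + 2) := by
  have h : ((k : ℤ) - 1) * ((k : ℤ) + 2) = (k:ℤ) * ((k:ℤ) + 1) - 2 := by ring
  rw [h]
  exact dvd_sub (Int.even_mul_succ_self (k:ℤ)).two_dvd (dvd_refl 2)

lemma two_mul_blockStart (k : ℕ) :
    2 * blockStart k = ((k : ℤ) - 1) * ((k : ℤ) + 2) + 2 ^ (k + 2) := by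
  unfold blockStart
  rw [mul_add, Int.mul_ediv_cancel' (aux_dvd k)]
  ring

lemma blockStart_succ (k : ℕ) :
    blockStart (k + 1) = blockStart k + ((k:ℤ) + 1) + 2 ^ (k + 1) := by
  have h1 := two_mul_blockStart k
  have h2 := two_mul_blockStart (k + 1)
  push_cast at h2
  have e1 : ((k:ℤ) + 1 - 1) * ((k:ℤ) + 1 + 2) = ((k:ℤ) - 1) * ((k:ℤ) + 2) + 2*(k:ℤ) + 2 := by ring
  have e2 : (2:ℤ)^(k+1+2) = 2 * 2^(k+2) := by ring
  have e3 : (2:ℤ)^(k+2) = 2 * 2^(k+1) := by ring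
  rw [e1, e2] at h2
  linarith

lemma blockStart_lb (k : ℕ) : 2^(k+1) - 1 ≤ blockStart k := by
  have h := two_mul_blockStart k
  have hk : (0:ℤ) ≤ (k:ℤ) := Int.natCast_nonneg k
  have e3 : (2:ℤ)^(k+2) = 2 * 2^(k+1) := by ring
  nlinarith

lemma pow_pos' (k : ℕ) : (1:ℤ) ≤ 2^k := by exact one_le_pow₀ (by norm_num)

lemma blockStart_add_mono : Monotone (fun k : ℕ => blockStart k + k) := by
  apply monotone_nat_of_le_succ
  intro k
  have h := blockStart_succ k
  have := pow_pos' (k+1)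
  push_cast
  linarith

lemma blockStart_strictMono : StrictMono blockStart := by
  apply strictMono_nat_of_lt_succ
  intro k
  have h := blockStart_succ k
  have := pow_pos' (k+1)
  have hk : (0:ℤ) ≤ (k:ℤ) := Int.natCast_nonneg k
  linarith

def Wset : Set ℤ := {n : ℤ | n ≤ 3} ∪
      ⋃ k ∈ {k : ℕ | 1 ≤ k}, Set.Icc (blockStart k) (blockStart k + k)

lemma mem_Wset_iff (x : ℤ) : x ∈ Wset ↔
    x ≤ 3 ∨ ∃ k : ℕ, 1 ≤ k ∧ blockStart k ≤ x ∧ x ≤ blockStart k + k := by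
  simp only [Wset, Set.mem_union, Set.mem_setOf_eq, Set.mem_iUnion, Set.mem_Icc]
  tauto

lemma gap_free {k j : ℕ} (hj : 1 ≤ j) {y : ℤ}
    (h1 : blockStart k + k < y) (h2 : y < blockStart (k+1)) :
    ¬ (blockStart j ≤ y ∧ y ≤ blockStart j + j) := by
  rintro ⟨hl, hr⟩
  rcases le_or_gt j k with h | h
  · have := blockStart_add_mono h
    simp only [] at this
    linarith
  · have : k + 1 ≤ j := h
    have := blockStart_strictMono.monotone this
    linarith

lemma remove_mid (C : Set ℤ) (h : IsAddAsympCompl Wset C)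
    (a b c : ℤ) (ha : a ∈ C) (hb : b ∈ C) (hc : c ∈ C) (hab : a < b) (hbc : b < c) :
    IsAddAsympCompl Wset (C \ {b}) := by
  have haC : a ∈ C \ {b} := ⟨ha, by simp; omega⟩
  have hcC : c ∈ C \ {b} := ⟨hc, by simp; omega⟩
  refine ⟨⟨a, haC⟩, ?_⟩
  set K : ℕ := (c - a).toNat with hK
  have hKi : (K : ℤ) = c - a := Int.toNat_of_nonneg (by omega)
  have hK2 : 2 ≤ K := by omega
  set N : ℤ := b + blockStart K + K with hN
  apply Set.Finite.subset ((h.2).union (Set.finite_Icc (a + 4) N))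
  intro n hn
  obtain ⟨-, hn2⟩ := hn
  by_cases hmem : n ∈ Wset + C
  · right
    rw [Set.mem_add] at hmem
    obtain ⟨w, hw, c', hc', hwc⟩ := hmem
    have hc'b : c' = b := by
      by_contra hne
      exact hn2 (hwc ▸ Set.add_mem_add hw (⟨hc', hne⟩ : c' ∈ C \ {b}))
    rw [hc'b] at hwc
    -- n = w + b
    have hge : a + 4 ≤ n := by
      by_contra hlt
      push_neg at hlt
      have : (n - a) ∈ Wset := (mem_Wset_iff _).2 (Or.inl (by omega))
      have : (n - a) + a ∈ Wset + (C \ {b}) := Set.add_mem_add this haC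
      simp only [sub_add_cancel] at this
      exact hn2 this
    have hle : n ≤ N := by
      by_contra hgt
      push_neg at hgt
      have hwb : blockStart K + K < w := by omega
      have hbsK : (3:ℤ) < blockStart K + K := by
        have := blockStart_lb K
        have : (8:ℤ) ≤ 2^(K+1) := by
          calc (8:ℤ) = 2^3 := by norm_num
          _ ≤ 2^(K+1) := by
            apply pow_le_pow_right₀ (by norm_num)
            omega
        have := blockStart_lb K
        omega
      rcases (mem_Wset_iff w).1 hw with h3 | ⟨k, hk1, hkl, hkr⟩
      · omega
      · have hkK : K < k := by
          by_contra hkk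
          push_neg at hkk
          have := blockStart_add_mono hkk
          simp only [] at this
          omega
        rcases le_or_gt (w + (b - a)) (blockStart k + k) with hcase | hcase
        · have hwm : w + (b - a) ∈ Wset := (mem_Wset_iff _).2
            (Or.inr ⟨k, hk1, by omega, hcase⟩)
          have : (w + (b - a)) + a ∈ Wset + (C \ {b}) := Set.add_mem_add hwm haC
          have heq : (w + (b - a)) + a = n := by omega
          rw [heq] at this
          exact hn2 this
        · have hki : (K:ℤ) ≤ (k:ℤ) := by exact_mod_cast hkK.le
          have hwm : w - (c - b) ∈ Wset := (mem_Wset_iff _).2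
            (Or.inr ⟨k, hk1, by omega, by omega⟩)
          have : (w - (c - b)) + c ∈ Wset + (C \ {b}) := Set.add_mem_add hwm hcC
          have heq : (w - (c - b)) + c = n := by omega
          rw [heq] at this
          exact hn2 this
    exact Set.mem_Icc.2 ⟨hge, hle⟩
  · left
    exact ⟨trivial, hmem⟩

lemma finite_not_compl (C : Set ℤ) (hC : C.Finite) : ¬ IsAddAsympCompl Wset C := by
  rintro ⟨hne, hfin⟩
  obtain ⟨M, hM⟩ := hC.bddAbove
  obtain ⟨m, hm⟩ := hC.bddBelow
  simp only [upperBounds, lowerBounds, Set.mem_setOf_eq] at hM hm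
  set D : ℕ := (M - m).toNat with hD
  obtain ⟨c0, hc0⟩ := hne
  have hmM : m ≤ M := le_trans (hm hc0) (hM hc0)
  have hDi : (D : ℤ) = M - m := Int.toNat_of_nonneg (by omega)
  set K0 : ℕ := D + 3 with hK0
  have key : ∀ k : ℕ, K0 ≤ k → (blockStart (k+1) - 1 + m) ∉ Wset + C := by
    intro k hk hmem
    have hkD : D ≤ k := by omega
    have h2k : (k:ℤ) < 2^k := by exact_mod_cast Nat.lt_two_pow_self (n := k)
    have e1 : (2:ℤ)^(k+1) = 2 * 2^k := by ring
    have hpD : (D:ℤ) + 2 ≤ 2^(k+1) := by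
      have : (D:ℤ) ≤ (k:ℤ) := by exact_mod_cast hkD
      linarith
    rw [Set.mem_add] at hmem
    obtain ⟨w, hw, c, hc, hwc⟩ := hmem
    have hcm := hm hc
    have hcM := hM hc
    have hw1 : w ≤ blockStart (k+1) - 1 := by omega
    have hw2 : blockStart (k+1) - 1 - D ≤ w := by omega
    have hstep := blockStart_succ k
    have hw3 : blockStart k + k < w := by omega
    have hlb := blockStart_lb (k+1)
    have e2 : (2:ℤ)^(k+1+1) = 2 * 2^(k+1) := by ring
    have hwgt3 : ¬ (w ≤ 3) := by omega
    rcases (mem_Wset_iff w).1 hw with h3 | ⟨j, hj1, hjl, hjr⟩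
    · exact hwgt3 h3
    · exact gap_free hj1 hw3 (by omega) ⟨hjl, hjr⟩
  have hinj : Function.Injective (fun i : ℕ => blockStart (K0 + i + 1) - 1 + m) := by
    intro i j hij
    simp only [] at hij
    by_contra hne'
    rcases Nat.lt_or_ge i j with h | h
    · have := blockStart_strictMono (show K0 + i + 1 < K0 + j + 1 by omega)
      omega
    · have hji : j < i := by omega
      have := blockStart_strictMono (show K0 + j + 1 < K0 + i + 1 by omega)
      omega
  have hsub : ∀ i : ℕ, (blockStart (K0 + i + 1) - 1 + m) ∈
      (Set.univ : Set ℤ) \ (Wset + C) := by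
    intro i
    exact ⟨trivial, key (K0 + i) (by omega)⟩
  exact (Set.infinite_of_injective_forall_mem hinj hsub) hfin

theorem stmt_13 (W : Set ℤ)
    (hW : W = {n : ℤ | n ≤ 3} ∪
      ⋃ k ∈ {k : ℕ | 1 ≤ k}, Set.Icc (blockStart k) (blockStart k + k)) :
    (∀ C : Set ℤ, IsAddAsympCompl W C →
        ∀ a ∈ C, ∀ b ∈ C, ∀ c ∈ C, a < b → b < c →
          IsAddAsympCompl W (C \ {b})) ∧
      ¬ ∃ C : Set ℤ, IsAddMinAsympCompl W C := by
  have hWW : W = Wset := hW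
  subst hWW
  constructor
  · intro C hC a ha b hb c hc hab hbc
    exact remove_mid C hC a b c ha hb hc hab hbc
  · rintro ⟨C, ⟨hcompl, hmin⟩⟩
    have key : ∀ a ∈ C, ∀ b ∈ C, ∀ c ∈ C, a < b → b < c → False := by
      intro a ha b hb c hc hab hbc
      exact hmin b hb (remove_mid C hcompl a b c ha hb hc hab hbc)
    have hinf : C.Infinite := by
      by_contra hfin
      rw [Set.not_infinite] at hfin
      exact finite_not_compl C hfin hcompl
    obtain ⟨x, hx⟩ := hcompl.1
    obtain ⟨y, hy⟩ := (hinf.diff (Set.finite_singleton x)).nonempty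
    obtain ⟨z, hz⟩ := (hinf.diff ((Set.finite_singleton y).insert x)).nonempty
    obtain ⟨hyC, hyx⟩ := hy
    obtain ⟨hzC, hzxy⟩ := hz
    simp only [Set.mem_insert_iff, Set.mem_singleton_iff, not_or] at hyx hzxy
    obtain ⟨hzx, hzy⟩ := hzxy
    rcases lt_trichotomy x y with h1 | h1 | h1
    · rcases lt_trichotomy y z with h2 | h2 | h2
      · exact key x hx y hyC z hzC h1 h2
      · exact hzy h2.symm
      · rcases lt_trichotomy x z with h3 | h3 | h3
        · exact key x hx z hzC y hyC h3 h2
        · exact hzx h3.symm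
        · exact key z hzC x hx y hyC h3 h1
    · exact absurd h1 (fun h => hyx h.symm)
    · rcases lt_trichotomy x z with h2 | h2 | h2
      · exact key y hyC x hx z hzC h1 h2
      · exact hzx h2.symm
      · rcases lt_trichotomy y z with h3 | h3 | h3
        · exact key y hyC z hzC x hx h3 h2
        · exact hzy h3.symm
        · exact key z hzC y hyC x hx h3 h1
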